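/- Let (P_n)_{n≥0} be polynomials in ℂ[x] with each P_n monic of degree n, P_0 = 1 and P_n(0) = 0 for n ≥ 1. In the ring ℂ[X,Y][[z]] of formal power series in z with coefficients in the polynomial ring in two commuting variables X, Y, define H_W = Σ_{n≥0} P_n(W) z^n for W ∈ {X, Y, X+Y}; each H_W is invertible since its constant z-coefficient is 1. Then the following are equivalent: (i) H_{X+Y}^{−1} = H_X^{−1} + H_Y^{−1} − 1; (ii) there exists u ∈ 𝒫₀,₁ such that Σ_{n≥0} P_n(x) z^n = Σ_{k≥0} x^k u(z)^k in ℂ[x][[z]] (i.e. the generating function equals 1/(1 − u(z)x)). -/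

import Mathlib

open PowerSeries Finset

lemma myRing.inverse_eq {R : Type*} [CommRing R] {a b : R} (h : a * b = 1) :
    Ring.inverse a = b := by
  have ha : IsUnit a := IsUnit.of_mul_eq_one b h
  calc Ring.inverse a = Ring.inverse a * (a * b) := by rw [h, mul_one]
    _ = (Ring.inverse a * a) * b := by ring
    _ = b := by rw [Ring.inverse_mul_cancel a ha, one_mul]

lemma my_coeff_pow_eq_zero {u : PowerSeries ℂ} (h0 : PowerSeries.constantCoeff u = 0)
    {n k : ℕ} (h : n < k) : PowerSeries.coeff n (u ^ k) = 0 := by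
  obtain ⟨w, hw⟩ := pow_dvd_pow_of_dvd (PowerSeries.X_dvd_iff.mpr h0) k
  rw [hw, mul_comm, PowerSeries.coeff_mul_X_pow', if_neg (not_le.mpr h)]

noncomputable def Sgeom (u : PowerSeries ℂ) : PowerSeries (Polynomial ℂ) :=
  PowerSeries.mk fun n => ∑ k ∈ Finset.range (n+1),
    Polynomial.C (PowerSeries.coeff n (u ^ k)) * Polynomial.X ^ k

noncomputable def Vgeom (u : PowerSeries ℂ) : PowerSeries (Polynomial ℂ) :=
  PowerSeries.map (Polynomial.C : ℂ →+* Polynomial ℂ) u * PowerSeries.C Polynomial.X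

lemma coeff_Vgeom (u : PowerSeries ℂ) (n : ℕ) :
    PowerSeries.coeff n (Vgeom u) = Polynomial.C (PowerSeries.coeff n u) * Polynomial.X := by
  rw [Vgeom, PowerSeries.coeff_mul_C, PowerSeries.coeff_map]

lemma geom_mul (u : PowerSeries ℂ) (h0 : constantCoeff u = 0) :
    Sgeom u * (1 - Vgeom u) = 1 := by
  ext n
  rw [mul_sub, mul_one, map_sub]
  have hv : PowerSeries.coeff n (Sgeom u * Vgeom u)
      = ∑ k ∈ range (n+1),
          Polynomial.C (PowerSeries.coeff n (u ^ (k+1))) * Polynomial.X ^ (k+1) := by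
    rw [show Sgeom u * Vgeom u
          = (Sgeom u * PowerSeries.map (Polynomial.C : ℂ →+* Polynomial ℂ) u)
              * PowerSeries.C Polynomial.X by rw [Vgeom]; ring,
      PowerSeries.coeff_mul_C, PowerSeries.coeff_mul]
    have hS : ∀ p ∈ antidiagonal n, PowerSeries.coeff p.1 (Sgeom u)
          * PowerSeries.coeff p.2 (PowerSeries.map (Polynomial.C : ℂ →+* Polynomial ℂ) u)
        = ∑ k ∈ range (n+1),
            Polynomial.C (PowerSeries.coeff p.1 (u ^ k) * PowerSeries.coeff p.2 u)
              * Polynomial.X ^ k := by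
      intro p hp
      rw [Sgeom, PowerSeries.coeff_mk, PowerSeries.coeff_map]
      rw [Finset.sum_subset (Finset.range_subset_range.mpr
        (Nat.succ_le_succ (Finset.HasAntidiagonal.antidiagonal.fst_le hp)))]
      · rw [Finset.sum_mul]
        refine Finset.sum_congr rfl fun k _ => ?_
        rw [mul_right_comm, ← map_mul]
      · intro k _ hk
        rw [Finset.mem_range, not_lt] at hk
        rw [my_coeff_pow_eq_zero h0 (by omega : p.1 < k), map_zero, zero_mul]
    rw [Finset.sum_congr rfl hS, Finset.sum_comm, Finset.sum_mul]
    refine Finset.sum_congr rfl fun k _ => ?_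
    rw [← Finset.sum_mul, ← map_sum, ← PowerSeries.coeff_mul, ← pow_succ, mul_assoc,
      ← pow_succ]
  rw [hv, Sgeom, PowerSeries.coeff_mk, Finset.sum_range_succ'
    (fun k => Polynomial.C (PowerSeries.coeff n (u ^ k)) * Polynomial.X ^ k),
    Finset.sum_range_succ
    (fun k => Polynomial.C (PowerSeries.coeff n (u ^ (k+1))) * Polynomial.X ^ (k+1)),
    my_coeff_pow_eq_zero h0 (by omega : n < n + 1)]
  simp [PowerSeries.coeff_one]

lemma additive_poly (q : Polynomial ℂ)
    (h : Polynomial.aeval (MvPolynomial.X 0 + MvPolynomial.X 1 : MvPolynomial (Fin 2) ℂ) q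
       = Polynomial.aeval (MvPolynomial.X (0 : Fin 2) : MvPolynomial (Fin 2) ℂ) q
         + Polynomial.aeval (MvPolynomial.X (1 : Fin 2) : MvPolynomial (Fin 2) ℂ) q) :
    q = Polynomial.C (q.coeff 1) * Polynomial.X := by
  have hab : ∀ a b : ℂ, q.eval (a + b) = q.eval a + q.eval b := by
    intro a b
    have h2 := congrArg (MvPolynomial.aeval (R := ℂ) ![a, b]) h
    rw [map_add, ← Polynomial.aeval_algHom_apply, ← Polynomial.aeval_algHom_apply,
      ← Polynomial.aeval_algHom_apply] at h2
    simpa using h2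
  -- q(n) = n * q(1)
  have hnat : ∀ n : ℕ, q.eval (n : ℂ) = n * q.eval 1 := by
    intro n
    induction n with
    | zero => simpa using hab 0 0
    | succ m ih =>
      have := hab m 1
      push_cast
      push_cast at this
      rw [this, ih]; ring
  have hzero : q - Polynomial.C (q.eval 1) * Polynomial.X = 0 := by
    apply Polynomial.eq_zero_of_infinite_isRoot
    apply Set.Infinite.mono (s := Set.range ((↑·) : ℕ → ℂ))
    · rintro x ⟨n, rfl⟩
      simp only [Set.mem_setOf_eq, Polynomial.IsRoot, Polynomial.eval_sub, Polynomial.eval_mul,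
        Polynomial.eval_C, Polynomial.eval_X, hnat n]
      ring
    · exact Set.infinite_range_of_injective Nat.cast_injective
  have hq : q = Polynomial.C (q.eval 1) * Polynomial.X := by linear_combination hzero
  have : q.coeff 1 = q.eval 1 := by rw [hq]; simp
  rw [this]; exact hq

theorem stmt_16 (P : ℕ → Polynomial ℂ)
    (hP0 : P 0 = 1)
    (hmonic : ∀ n, (P n).Monic) (hdeg : ∀ n, (P n).natDegree = n)
    (hzero : ∀ n, 1 ≤ n → (P n).coeff 0 = 0)
    (H : MvPolynomial (Fin 2) ℂ → PowerSeries (MvPolynomial (Fin 2) ℂ))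
    (hH : ∀ W, H W = PowerSeries.mk fun n => Polynomial.aeval W (P n)) :
    (Ring.inverse (H (MvPolynomial.X 0 + MvPolynomial.X 1)) =
        Ring.inverse (H (MvPolynomial.X 0)) + Ring.inverse (H (MvPolynomial.X 1)) - 1)
    ↔
    (∃ u : PowerSeries ℂ,
      PowerSeries.constantCoeff u = 0 ∧ PowerSeries.coeff 1 u = 1 ∧
      ∀ n : ℕ, P n = ∑ k ∈ Finset.range (n + 1),
        Polynomial.C (PowerSeries.coeff n (u ^ k)) * Polynomial.X ^ k) := by
  classical
  set F : PowerSeries (Polynomial ℂ) := PowerSeries.mk fun n => P n with hFdef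
  have hcF : ∀ n, PowerSeries.coeff n F = P n := fun n => PowerSeries.coeff_mk n _
  have hFunit : IsUnit F := by
    rw [PowerSeries.isUnit_iff_constantCoeff, ← PowerSeries.coeff_zero_eq_constantCoeff_apply,
      hcF, hP0]
    exact isUnit_one
  have hFG : F * Ring.inverse F = 1 := Ring.mul_inverse_cancel F hFunit
  have hHmap : ∀ W : MvPolynomial (Fin 2) ℂ,
      H W = PowerSeries.map (Polynomial.aeval W :
        Polynomial ℂ →ₐ[ℂ] MvPolynomial (Fin 2) ℂ).toRingHom F := by
    intro W; rw [hH]; ext n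
    simp [PowerSeries.coeff_map, hcF]
  have hinv : ∀ W : MvPolynomial (Fin 2) ℂ,
      Ring.inverse (H W) = PowerSeries.map (Polynomial.aeval W :
        Polynomial ℂ →ₐ[ℂ] MvPolynomial (Fin 2) ℂ).toRingHom (Ring.inverse F) := by
    intro W
    apply myRing.inverse_eq
    rw [hHmap, ← map_mul, hFG, map_one]
  rw [hinv, hinv, hinv]
  constructor
  · -- forward direction
    intro heq
    set G := Ring.inverse F with hGdef
    have hcoeff : ∀ n, Polynomial.aeval
          (MvPolynomial.X 0 + MvPolynomial.X 1 : MvPolynomial (Fin 2) ℂ)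
          (PowerSeries.coeff n G)
        = Polynomial.aeval (MvPolynomial.X (0 : Fin 2) : MvPolynomial (Fin 2) ℂ)
            (PowerSeries.coeff n G)
          + Polynomial.aeval (MvPolynomial.X (1 : Fin 2) : MvPolynomial (Fin 2) ℂ)
            (PowerSeries.coeff n G)
          - PowerSeries.coeff n (1 : PowerSeries (MvPolynomial (Fin 2) ℂ)) := by
      intro n
      have h2 := congrArg (PowerSeries.coeff n) heq
      rw [map_sub, map_add] at h2
      simpa [PowerSeries.coeff_map] using h2
    have hQ0 : PowerSeries.coeff 0 G = 1 := by
      have h3 := congrArg (PowerSeries.constantCoeff (R := Polynomial ℂ)) hFG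
      rw [map_mul, map_one] at h3
      have hcF0 : PowerSeries.constantCoeff F = 1 := by
        rw [← PowerSeries.coeff_zero_eq_constantCoeff_apply, hcF, hP0]
      rw [hcF0, one_mul] at h3
      rw [PowerSeries.coeff_zero_eq_constantCoeff_apply]
      exact h3
    have hP1 : P 1 = Polynomial.X := by
      have h4 := (hmonic 1).eq_X_add_C (hdeg 1)
      rw [hzero 1 le_rfl, map_zero, add_zero] at h4
      exact h4
    have hQ1 : PowerSeries.coeff 1 G = -Polynomial.X := by
      have h5 := congrArg (PowerSeries.coeff 1) hFG
      rw [PowerSeries.coeff_mul, Finset.Nat.sum_antidiagonal_succ,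
        Finset.Nat.antidiagonal_zero, Finset.sum_singleton] at h5
      simp only [hcF, hP0, hP1, hQ0, PowerSeries.coeff_one, one_mul, mul_one,
        if_neg (Nat.one_ne_zero)] at h5
      linear_combination h5
    set u : PowerSeries ℂ :=
      PowerSeries.mk fun n => -((PowerSeries.coeff n G).coeff 1) with hudef
    have hcu : ∀ n, PowerSeries.coeff n u
        = -((PowerSeries.coeff n G).coeff 1) := fun n =>
      PowerSeries.coeff_mk n _
    have hu0 : PowerSeries.constantCoeff u = 0 := by
      rw [← PowerSeries.coeff_zero_eq_constantCoeff_apply, hcu, hQ0]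
      simp [Polynomial.coeff_one]
    have hu1 : PowerSeries.coeff 1 u = 1 := by
      rw [hcu, hQ1]
      simp
    have hadd : ∀ m : ℕ, PowerSeries.coeff (m + 1) G
        = Polynomial.C ((PowerSeries.coeff (m + 1) G).coeff 1)
          * Polynomial.X := by
      intro m
      apply additive_poly
      have := hcoeff (m + 1)
      rwa [PowerSeries.coeff_one, if_neg (Nat.succ_ne_zero m), sub_zero] at this
    have hG : G = 1 - Vgeom u := by
      ext n : 1
      rw [map_sub, coeff_Vgeom, hcu, PowerSeries.coeff_one]
      cases n with
      | zero => rw [hQ0, if_pos rfl]; simp [Polynomial.coeff_one]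
      | succ m =>
        rw [hadd m, if_neg (Nat.succ_ne_zero m)]
        simp
    have h1 : Sgeom u * (1 - Vgeom u) = 1 := geom_mul u hu0
    have hFS : F = Sgeom u := by
      calc F = F * (Sgeom u * (1 - Vgeom u)) := by rw [h1, mul_one]
        _ = Sgeom u * (F * (1 - Vgeom u)) := by ring
        _ = Sgeom u := by rw [← hG, hFG, mul_one]
    refine ⟨u, hu0, hu1, fun n => ?_⟩
    have := congrArg (PowerSeries.coeff n) hFS
    rwa [hcF, Sgeom, PowerSeries.coeff_mk] at this
  · -- backward direction
    rintro ⟨u, hu0, hu1, hPn⟩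
    have hFS : F = Sgeom u := by
      ext n
      rw [hcF, hPn n, Sgeom, PowerSeries.coeff_mk]
    have hGinv : Ring.inverse F = 1 - Vgeom u := by
      apply myRing.inverse_eq
      rw [hFS, geom_mul u hu0]
    rw [hGinv]
    ext n : 1
    simp only [map_sub, map_add, PowerSeries.coeff_map, map_one, coeff_Vgeom,
      PowerSeries.coeff_one, map_mul, Polynomial.aeval_C, Polynomial.aeval_X,
      AlgHom.toRingHom_eq_coe, RingHom.coe_coe]
    cases n with
    | zero => simp [hu0]
    | succ m =>
      simp only [if_neg (Nat.succ_ne_zero m)]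
      ring
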